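/- With μ, g, α, β, U = [η₁, …, ηₙ], r = rank(G₀), and Λ(s) = diag(λ₁(s), …, λₙ(s)) defined as follows: μ = 1 if rank(G₀) = m = n, μ = √2 if rank(G₀) = min(m, n) and m ≠ n, μ = (1 + √5)/2 if rank(G₀) < min(m, n); g(s) = σ − (L_f + L_G)s, α(s) = σ − L_G·s, β(s) = μ·σ⁻¹·L_G·s; λᵢ(s) = max{ g(s)/(α(s)‖G₀†ηᵢ‖ + β(s)), g(s), 0 } for i ≤ r and λᵢ(s) = 0 for i > r. Let T ≥ 0 and let φ : [0, T] → ℝⁿ be differentiable with φ(0) = 0, (L_f + L_G)·‖φ(t)‖ ≤ σ for all t, and φ′(t) = f₀ + U·Λ(‖φ(t)‖)·q(t) for some q : [0, T] → ℝⁿ with ‖q(t)‖₁ ≤ 1 for all t. Then for every consistent pair (f̂, Ĝ) there exists u : [0, T] → ℝᵐ with ‖u(t)‖ ≤ 1 for all t such that φ′(t) = f̂(φ(t)) + Ĝ(φ(t))·u(t) for every t ∈ [0, T]. -/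

import Mathlib

open Matrix Set

noncomputable def matOpNorm {n m : ℕ} (M : Matrix (Fin n) (Fin m) ℝ) : ℝ :=
  ‖LinearMap.toContinuousLinearMap (Matrix.toEuclideanLin M)‖

noncomputable def appMat {n m : ℕ} (M : Matrix (Fin n) (Fin m) ℝ)
    (v : EuclideanSpace ℝ (Fin m)) : EuclideanSpace ℝ (Fin n) :=
  Matrix.toEuclideanLin M v

noncomputable def colSpace {n m : ℕ} (M : Matrix (Fin n) (Fin m) ℝ) :
    Submodule ℝ (EuclideanSpace ℝ (Fin n)) :=
  LinearMap.range (Matrix.toEuclideanLin M)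

noncomputable def minSV {n m : ℕ} (M : Matrix (Fin n) (Fin m) ℝ) : ℝ :=
  Real.sqrt (sInf {μ : ℝ | μ ≠ 0 ∧
    ∃ i, (show (Mᵀ * M).IsHermitian by
      have h := Matrix.isHermitian_conjTranspose_mul_self M
      rwa [Matrix.conjTranspose_eq_transpose_of_trivial] at h).eigenvalues i = μ})

/-- A pair `(fh, Gh)` consistent with the prior knowledge of the dynamics. -/
structure Consistent {n m : ℕ} (R : Matrix (Fin n) (Fin m) ℝ) (Lf LG : ℝ)
    (f₀ : EuclideanSpace ℝ (Fin n)) (G₀ : Matrix (Fin n) (Fin m) ℝ)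
    (fh : EuclideanSpace ℝ (Fin n) → EuclideanSpace ℝ (Fin n))
    (Gh : EuclideanSpace ℝ (Fin n) → Matrix (Fin n) (Fin m) ℝ) : Prop where
  lipf : ∀ y z, ‖fh y - fh z‖ ≤ Lf * ‖y - z‖
  lipG : ∀ y z, matOpNorm (Gh y - Gh z) ≤ LG * ‖y - z‖
  f_zero : fh 0 = f₀
  G_zero : Gh 0 = G₀
  f_im : ∀ y, fh y ∈ colSpace R
  factor : ∃ Hh : EuclideanSpace ℝ (Fin n) → Matrix (Fin m) (Fin m) ℝ,
    IsUnit (Hh 0) ∧ ∀ y, Gh y = R * Hh y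

/-- The guaranteed velocity set at `x`. -/
noncomputable def GVS {n m : ℕ} (R : Matrix (Fin n) (Fin m) ℝ) (Lf LG : ℝ)
    (f₀ : EuclideanSpace ℝ (Fin n)) (G₀ : Matrix (Fin n) (Fin m) ℝ)
    (x : EuclideanSpace ℝ (Fin n)) : Set (EuclideanSpace ℝ (Fin n)) :=
  ⋂ (fh : EuclideanSpace ℝ (Fin n) → EuclideanSpace ℝ (Fin n))
    (Gh : EuclideanSpace ℝ (Fin n) → Matrix (Fin n) (Fin m) ℝ)
    (_ : Consistent R Lf LG f₀ G₀ fh Gh),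
      {w | ∃ u : EuclideanSpace ℝ (Fin m), ‖u‖ ≤ 1 ∧ w = fh x + appMat (Gh x) u}


open scoped RealInnerProductSpace

section Helpers
variable {n m : ℕ}

lemma Matrix.isHermitian_transpose_mul_self (M : Matrix (Fin n) (Fin m) ℝ) :
    (Mᵀ * M).IsHermitian := by
  have h := Matrix.isHermitian_conjTranspose_mul_self M
  rwa [Matrix.conjTranspose_eq_transpose_of_trivial] at h

lemma appMat_def (M : Matrix (Fin n) (Fin m) ℝ) (v : EuclideanSpace ℝ (Fin m)) :
    appMat M v = Matrix.toEuclideanLin M v := rfl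

lemma mem_colSpace {M : Matrix (Fin n) (Fin m) ℝ} {y : EuclideanSpace ℝ (Fin n)} :
    y ∈ colSpace M ↔ ∃ v, Matrix.toEuclideanLin M v = y := Iff.rfl

lemma toEuclideanLin_mul_apply {a b c : ℕ} (A : Matrix (Fin a) (Fin b) ℝ)
    (B : Matrix (Fin b) (Fin c) ℝ) (v : EuclideanSpace ℝ (Fin c)) :
    Matrix.toEuclideanLin (A * B) v = Matrix.toEuclideanLin A (Matrix.toEuclideanLin B v) := by
  ext j
  simp [Matrix.toEuclideanLin_apply, Matrix.mulVec_mulVec]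

lemma colSpace_mul_unit (R : Matrix (Fin n) (Fin m) ℝ) (H : Matrix (Fin m) (Fin m) ℝ)
    (hH : IsUnit H) : colSpace (R * H) = colSpace R := by
  apply le_antisymm
  · rintro y hy
    obtain ⟨v, rfl⟩ := mem_colSpace.mp hy
    exact mem_colSpace.mpr ⟨Matrix.toEuclideanLin H v, (toEuclideanLin_mul_apply R H v).symm⟩
  · rintro y hy
    obtain ⟨v, rfl⟩ := mem_colSpace.mp hy
    refine mem_colSpace.mpr ⟨Matrix.toEuclideanLin H⁻¹ v, ?_⟩
    rw [toEuclideanLin_mul_apply, ← toEuclideanLin_mul_apply H H⁻¹ v,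
      Matrix.mul_nonsing_inv H ((Matrix.isUnit_iff_isUnit_det H).mp hH)]
    ext j
    simp [Matrix.toEuclideanLin_apply]

lemma eigvec_app (G : Matrix (Fin n) (Fin m) ℝ) (i : Fin m) :
    Matrix.toEuclideanLin (Gᴴ * G) ((Matrix.isHermitian_transpose_mul_self G).eigenvectorBasis i)
    = (Matrix.isHermitian_transpose_mul_self G).eigenvalues i •
      (Matrix.isHermitian_transpose_mul_self G).eigenvectorBasis i := by
  have h := (Matrix.isHermitian_transpose_mul_self G).mulVec_eigenvectorBasis i
  ext j
  have := congrFun h j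
  simpa [Matrix.toEuclideanLin_apply] using this

lemma normGv_sq (G : Matrix (Fin n) (Fin m) ℝ) (v : EuclideanSpace ℝ (Fin m)) :
    ‖appMat G v‖ ^ 2 = ∑ i, (Matrix.isHermitian_transpose_mul_self G).eigenvalues i *
      ((Matrix.isHermitian_transpose_mul_self G).eigenvectorBasis.repr v i) ^ 2 := by
  set hH := Matrix.isHermitian_transpose_mul_self G with hHdef
  set b := hH.eigenvectorBasis with hbdef
  have h1 : ‖appMat G v‖ ^ 2 = ⟪v, Matrix.toEuclideanLin (Gᴴ * G) v⟫ := by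
    have : Matrix.toEuclideanLin (Gᴴ * G) v
        = Matrix.toEuclideanLin Gᴴ (Matrix.toEuclideanLin G v) := by
      ext j
      simp [Matrix.toEuclideanLin_apply, Matrix.mulVec_mulVec]
    rw [this, Matrix.toEuclideanLin_conjTranspose_eq_adjoint,
      LinearMap.adjoint_inner_right]
    rw [real_inner_self_eq_norm_sq]
    rfl
  have h2 : ∀ i, b.repr (Matrix.toEuclideanLin (Gᴴ * G) v) i
      = hH.eigenvalues i * b.repr v i := by
    intro i
    rw [b.repr_apply_apply, b.repr_apply_apply]
    have hsym := (Matrix.isHermitian_iff_isSymmetric.mp (Matrix.isHermitian_conjTranspose_mul_self G))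
    rw [← hsym (b i) v, eigvec_app]
    exact real_inner_smul_left _ _ _
  rw [h1, ← b.repr.inner_map_map v (Matrix.toEuclideanLin (Gᴴ * G) v)]
  rw [PiLp.inner_apply]
  refine Finset.sum_congr rfl fun i _ => ?_
  rw [h2 i]
  simp [RCLike.inner_apply]
  ring

lemma normv_sq (G : Matrix (Fin n) (Fin m) ℝ) (v : EuclideanSpace ℝ (Fin m)) :
    ‖v‖ ^ 2 = ∑ i, ((Matrix.isHermitian_transpose_mul_self G).eigenvectorBasis.repr v i) ^ 2 := by
  set b := (Matrix.isHermitian_transpose_mul_self G).eigenvectorBasis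
  rw [← real_inner_self_eq_norm_sq, ← b.repr.inner_map_map v v, PiLp.inner_apply]
  refine Finset.sum_congr rfl fun i _ => ?_
  simp [RCLike.inner_apply]

variable {G : Matrix (Fin n) (Fin m) ℝ}

lemma SSnonempty (hG : G ≠ 0) : {μ : ℝ | μ ≠ 0 ∧
    ∃ i, (Matrix.isHermitian_transpose_mul_self G).eigenvalues i = μ}.Nonempty := by
  by_contra h
  rw [Set.not_nonempty_iff_eq_empty] at h
  have hz : ∀ i, (Matrix.isHermitian_transpose_mul_self G).eigenvalues i = 0 := by
    intro i
    by_contra hi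
    exact absurd (Set.eq_empty_iff_forall_notMem.mp h _ ⟨hi, i, rfl⟩) (fun c => c)
  apply hG
  have hlin : Matrix.toEuclideanLin G = 0 := by
    apply LinearMap.ext
    intro v
    have := normGv_sq G v
    simp only [hz, zero_mul, Finset.sum_const_zero] at this
    have hn : ‖appMat G v‖ = 0 := by
      have := sq_eq_zero_iff.mp this
      simpa using this
    simpa [appMat] using norm_eq_zero.mp hn
  have := Matrix.toEuclideanLin.injective
    (by simpa using hlin : Matrix.toEuclideanLin G = Matrix.toEuclideanLin 0)
  simpa using this

lemma SSfinite : {μ : ℝ | μ ≠ 0 ∧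
    ∃ i, (Matrix.isHermitian_transpose_mul_self G).eigenvalues i = μ}.Finite :=
  Set.Finite.subset (Set.finite_range (Matrix.isHermitian_transpose_mul_self G).eigenvalues)
    (fun μ hμ => hμ.2.imp fun _ h => h)

lemma SsInf_nonneg : 0 ≤ sInf {μ : ℝ | μ ≠ 0 ∧
    ∃ i, (Matrix.isHermitian_transpose_mul_self G).eigenvalues i = μ} := by
  rcases Set.eq_empty_or_nonempty {μ : ℝ | μ ≠ 0 ∧
    ∃ i, (Matrix.isHermitian_transpose_mul_self G).eigenvalues i = μ} with h | h
  · simp [h]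
  · exact le_csInf h fun μ hμ => by
      obtain ⟨hne, i, hi⟩ := hμ
      exact hi ▸ Matrix.eigenvalues_conjTranspose_mul_self_nonneg G i

lemma minSV_sq : minSV G ^ 2 = sInf {μ : ℝ | μ ≠ 0 ∧
    ∃ i, (Matrix.isHermitian_transpose_mul_self G).eigenvalues i = μ} :=
  Real.sq_sqrt SsInf_nonneg

lemma minSV_pos (hG : G ≠ 0) : 0 < minSV G := by
  apply Real.sqrt_pos.mpr
  have hmem := (SSnonempty hG).csInf_mem SSfinite
  rcases lt_or_eq_of_le (le_csInf (SSnonempty hG) fun μ hμ => by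
    obtain ⟨hne, i, hi⟩ := hμ
    exact hi ▸ Matrix.eigenvalues_conjTranspose_mul_self_nonneg G i) with h | h
  · exact h
  · exact absurd h.symm hmem.1

lemma minSV_mul_norm_le (hG : G ≠ 0) (v : EuclideanSpace ℝ (Fin m))
    (hv : ∀ z, Matrix.toEuclideanLin G z = 0 → ⟪z, v⟫ = 0) :
    minSV G * ‖v‖ ≤ ‖appMat G v‖ := by
  set hH := Matrix.isHermitian_transpose_mul_self G
  set b := hH.eigenvectorBasis with hb
  have hσ := minSV_pos hG
  have key : (minSV G * ‖v‖) ^ 2 ≤ ‖appMat G v‖ ^ 2 := by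
    rw [mul_pow, minSV_sq, normv_sq G v, normGv_sq G v, Finset.mul_sum]
    refine Finset.sum_le_sum fun i _ => ?_
    by_cases hei : hH.eigenvalues i = 0
    · have hGbi : Matrix.toEuclideanLin G (b i) = 0 := by
        have h1 := normGv_sq G (b i)
        have hrepr : ∀ j, b.repr (b i) j = if j = i then 1 else 0 := by
          intro j
          rw [b.repr_self i]
          by_cases h : j = i <;> simp [EuclideanSpace.single, h]
        simp only [hrepr] at h1
        rw [Finset.sum_eq_single i] at h1
        · rw [hei] at h1
          simp only [zero_mul] at h1
          have : ‖appMat G (b i)‖ = 0 := by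
            have := sq_eq_zero_iff.mp h1
            simpa using this
          simpa [appMat] using norm_eq_zero.mp this
        · intro j _ hj; rw [show (b.repr (b i)) j = 0 from (hrepr j).trans (if_neg hj)]; simp
        · intro hii; exact absurd (Finset.mem_univ i) hii
      have hci : b.repr v i = 0 := by
        rw [b.repr_apply_apply]
        exact hv (b i) hGbi
      show _ * (b.repr v i) ^ 2 ≤ _ * (b.repr v i) ^ 2
      rw [hci]; simp
    · have hle : sInf {μ : ℝ | μ ≠ 0 ∧ ∃ i, hH.eigenvalues i = μ} ≤ hH.eigenvalues i :=
        csInf_le SSfinite.bddBelow ⟨hei, i, rfl⟩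
      exact mul_le_mul_of_nonneg_right hle (sq_nonneg _)
  have h1 : 0 ≤ minSV G * ‖v‖ := mul_nonneg hσ.le (norm_nonneg _)
  nlinarith [norm_nonneg (appMat G v)]

lemma exists_preimage (hG : G ≠ 0)
    {d : EuclideanSpace ℝ (Fin n)} (hd : d ∈ LinearMap.range (Matrix.toEuclideanLin G)) :
    ∃ v, Matrix.toEuclideanLin G v = d ∧ minSV G * ‖v‖ ≤ ‖d‖ := by
  obtain ⟨v', hv'⟩ := hd
  set L := Matrix.toEuclideanLin G
  set K := LinearMap.ker L
  set v := v' - (K.orthogonalProjection v' : EuclideanSpace ℝ (Fin m)) with hv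
  have hvo : v ∈ Kᗮ := K.sub_starProjection_mem_orthogonal v'
  have hGv : L v = d := by
    have hk : L ((K.orthogonalProjection v' : EuclideanSpace ℝ (Fin m))) = 0 :=
      (K.orthogonalProjection v').2
    rw [hv, map_sub, hk, sub_zero, hv']
  refine ⟨v, hGv, ?_⟩
  have := minSV_mul_norm_le hG v (fun z hz => (Submodule.mem_orthogonal K v).mp hvo z hz)
  rw [show appMat G v = d from hGv] at this
  exact this

set_option maxHeartbeats 1000000 in
lemma solve_perturbed {D : Matrix (Fin n) (Fin m) ℝ} (hG : G ≠ 0) {ρ : ℝ} (hρ : ρ < 1)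
    (hDn : ∀ u : EuclideanSpace ℝ (Fin m),
      ‖Matrix.toEuclideanLin D u‖ ≤ minSV G * ρ * ‖u‖)
    (hDr : ∀ u, Matrix.toEuclideanLin D u ∈ LinearMap.range (Matrix.toEuclideanLin G))
    (v : EuclideanSpace ℝ (Fin m)) :
    ∃ u, Matrix.toEuclideanLin (G + D) u = Matrix.toEuclideanLin G v ∧
      (1 - ρ) * ‖u‖ ≤ ‖v‖ := by
  have hσ := minSV_pos hG
  set L := Matrix.toEuclideanLin G with hL
  set K := LinearMap.ker L with hK
  set Lr : Kᗮ →ₗ[ℝ] LinearMap.range L :=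
    (L.domRestrict Kᗮ).codRestrict (LinearMap.range L)
      (fun x => ⟨(x : EuclideanSpace ℝ (Fin m)), rfl⟩) with hLr
  have hinj : Function.Injective Lr := by
    intro x y hxy
    have h0 : L (↑x - ↑y) = 0 := by
      have : L x = L y := congrArg Subtype.val hxy
      rw [map_sub, this, sub_self]
    have hmem : ((x : EuclideanSpace ℝ (Fin m)) - ↑y) ∈ K := h0
    have hperp : ((x : EuclideanSpace ℝ (Fin m)) - ↑y) ∈ Kᗮ := Kᗮ.sub_mem x.2 y.2
    have : ((x : EuclideanSpace ℝ (Fin m)) - ↑y) = 0 := by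
      have := (Submodule.mem_orthogonal K _).mp hperp _ hmem
      rwa [inner_self_eq_zero] at this
    exact Subtype.ext (sub_eq_zero.mp this)
  have hsurj : Function.Surjective Lr := by
    rintro ⟨y, x, hx⟩
    refine ⟨⟨x - (K.orthogonalProjection x : EuclideanSpace ℝ (Fin m)),
      K.sub_starProjection_mem_orthogonal x⟩, ?_⟩
    apply Subtype.ext
    show L (x - (K.orthogonalProjection x : EuclideanSpace ℝ (Fin m))) = y
    rw [map_sub, (K.orthogonalProjection x).2, sub_zero, hx]
  set e := LinearEquiv.ofBijective Lr ⟨hinj, hsurj⟩ with he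
  set P : EuclideanSpace ℝ (Fin m) →ₗ[ℝ] EuclideanSpace ℝ (Fin m) :=
    Kᗮ.subtype ∘ₗ (e.symm : LinearMap.range L →ₗ[ℝ] Kᗮ) ∘ₗ
      ((Matrix.toEuclideanLin D).codRestrict (LinearMap.range L) hDr) with hP
  have hPmem : ∀ u, P u ∈ Kᗮ := fun u => (e.symm _).2
  have hLP : ∀ u, L (P u) = Matrix.toEuclideanLin D u := by
    intro u
    have h1 : e (e.symm ⟨Matrix.toEuclideanLin D u, hDr u⟩)
        = ⟨Matrix.toEuclideanLin D u, hDr u⟩ := e.apply_symm_apply _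
    have h2 : (e (e.symm ⟨Matrix.toEuclideanLin D u, hDr u⟩) : EuclideanSpace ℝ (Fin n))
        = L ((e.symm ⟨Matrix.toEuclideanLin D u, hDr u⟩ : Kᗮ) : EuclideanSpace ℝ (Fin m)) := rfl
    have h3 := congrArg Subtype.val h1
    rw [h2] at h3
    exact h3
  have hPn : ∀ u, ‖P u‖ ≤ ρ * ‖u‖ := by
    intro u
    have h1 := minSV_mul_norm_le hG (P u)
      (fun z hz => (Submodule.mem_orthogonal K _).mp (hPmem u) z hz)
    have h2 : ‖appMat G (P u)‖ = ‖Matrix.toEuclideanLin D u‖ := by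
      rw [show appMat G (P u) = Matrix.toEuclideanLin D u from hLP u]
    rw [h2] at h1
    have h3 := (hDn u).trans_eq (by ring : minSV G * ρ * ‖u‖ = minSV G * (ρ * ‖u‖))
    have := h1.trans h3
    exact (mul_le_mul_iff_right₀ hσ).mp this
  set F : EuclideanSpace ℝ (Fin m) →ₗ[ℝ] EuclideanSpace ℝ (Fin m) := LinearMap.id + P with hF
  have hFinj : Function.Injective F := by
    rw [← LinearMap.ker_eq_bot, LinearMap.ker_eq_bot']
    intro u hu
    have hu' : u + P u = 0 := hu
    have h1 : ‖u‖ = ‖P u‖ := by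
      have : u = -(P u) := by linear_combination (norm := abel) hu'
      conv_lhs => rw [this]
      rw [norm_neg]
    have h2 := hPn u
    rw [← h1] at h2
    have : (1 - ρ) * ‖u‖ ≤ 0 := by nlinarith
    have hn := norm_nonneg u
    have : ‖u‖ = 0 := by nlinarith
    exact norm_eq_zero.mp this
  obtain ⟨u, hu⟩ := LinearMap.injective_iff_surjective.mp hFinj v
  have hu' : u + P u = v := hu
  refine ⟨u, ?_, ?_⟩
  · have : Matrix.toEuclideanLin (G + D) u = L u + Matrix.toEuclideanLin D u := by
      rw [map_add]; rfl
    rw [this, ← hLP u, ← map_add, hu']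
  · have h1 : ‖u‖ ≤ ‖v‖ + ρ * ‖u‖ := by
      have : u = v - P u := by linear_combination (norm := abel) hu'
      calc ‖u‖ = ‖v - P u‖ := by rw [← this]
        _ ≤ ‖v‖ + ‖P u‖ := norm_sub_le _ _
        _ ≤ ‖v‖ + ρ * ‖u‖ := by linarith [hPn u]
    linarith

lemma sum_formula {N : ℕ} (U : Matrix (Fin N) (Fin N) ℝ) (lamv : Fin N → ℝ)
    (qt : EuclideanSpace ℝ (Fin N)) (η : Fin N → EuclideanSpace ℝ (Fin N))
    (hη : ∀ i j, η i j = U j i) :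
    Matrix.toEuclideanLin U (Matrix.toEuclideanLin (Matrix.diagonal lamv) qt)
      = ∑ i, (lamv i * qt i) • η i := by
  ext j
  have hs : (∑ i, (lamv i * qt i) • η i) j = ∑ i, (lamv i * qt i) * η i j :=
    by rw [WithLp.ofLp_sum]; exact Finset.sum_apply j Finset.univ _
  rw [hs]
  simp only [Matrix.toEuclideanLin_apply]
  show (U *ᵥ (Matrix.diagonal lamv *ᵥ WithLp.ofLp qt)) j = _
  have hinner : Matrix.diagonal lamv *ᵥ WithLp.ofLp qt
      = fun i => lamv i * qt i := funext fun i => Matrix.mulVec_diagonal _ _ _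
  rw [hinner]
  simp only [Matrix.mulVec, dotProduct, hη]
  exact Finset.sum_congr rfl fun i _ => by ring

end Helpers

set_option maxHeartbeats 1600000

/-- **Theorem 4, trajectory part.** Every trajectory of the polytope
system `ẋ = f₀ + U Λ(‖x‖) q`, `‖q‖₁ ≤ 1`, staying in the region
`(L_f + L_G)‖x‖ ≤ σ`, is a trajectory of every system consistent with the prior
knowledge, realized by admissible controls. -/
theorem theorem4_polytope_trajectory {n m : ℕ} (R : Matrix (Fin n) (Fin m) ℝ)
    (Lf LG : ℝ) (hLf : 0 < Lf) (hLG : 0 < LG)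
    (f₀ : EuclideanSpace ℝ (Fin n)) (hf₀ : f₀ ∈ colSpace R)
    (H₀ : Matrix (Fin m) (Fin m) ℝ) (hH₀ : IsUnit H₀)
    (G₀ : Matrix (Fin n) (Fin m) ℝ) (hG₀fac : G₀ = R * H₀) (hG₀ : G₀ ≠ 0)
    (μ : ℝ)
    (hμ : μ = if G₀.rank = m ∧ m = n then 1
      else if G₀.rank = min m n then Real.sqrt 2
      else (1 + Real.sqrt 5) / 2)
    (g α β : ℝ → ℝ)
    (hg : ∀ s, g s = minSV G₀ - (Lf + LG) * s)
    (hα : ∀ s, α s = minSV G₀ - LG * s)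
    (hβ : ∀ s, β s = μ * (minSV G₀)⁻¹ * (LG * s))
    -- a singular value decomposition `G₀ = U * S * Vᵀ`
    (U : Matrix (Fin n) (Fin n) ℝ) (hU : Uᵀ * U = 1)
    (V : Matrix (Fin m) (Fin m) ℝ) (hV : Vᵀ * V = 1)
    (S : Matrix (Fin n) (Fin m) ℝ) (hSVD : G₀ = U * S * Vᵀ)
    (hSdiag : ∀ (i : Fin n) (j : Fin m), (i : ℕ) ≠ (j : ℕ) → S i j = 0)
    (hSnonneg : ∀ (i : Fin n) (j : Fin m), 0 ≤ S i j)
    (hSmono : ∀ (i i' : Fin n) (j j' : Fin m), (i : ℕ) = (j : ℕ) →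
      (i' : ℕ) = (j' : ℕ) → (i : ℕ) ≤ (i' : ℕ) → S i' j' ≤ S i j)
    -- the columns `ηᵢ` of `U` and the minimal-norm solutions `w i` of `G₀ w = ηᵢ`
    (η : Fin n → EuclideanSpace ℝ (Fin n)) (hη : ∀ i j, η i j = U j i)
    (w : Fin n → EuclideanSpace ℝ (Fin m))
    (hw : ∀ i : Fin n, (i : ℕ) < G₀.rank →
      w i ∈ colSpace G₀ᵀ ∧ appMat G₀ (w i) = η i)
    (lam : Fin n → ℝ → ℝ)
    (hlam : ∀ (i : Fin n) (s : ℝ), lam i s =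
      if (i : ℕ) < G₀.rank then
        max (max (g s / (α s * ‖w i‖ + β s)) (g s)) 0
      else 0)
    (T : ℝ) (hT : 0 ≤ T)
    (φ φ' : ℝ → EuclideanSpace ℝ (Fin n)) (hφ0 : φ 0 = 0)
    (hstay : ∀ t ∈ Set.Icc (0 : ℝ) T, (Lf + LG) * ‖φ t‖ ≤ minSV G₀)
    (hderiv : ∀ t ∈ Set.Icc (0 : ℝ) T, HasDerivAt φ (φ' t) t)
    (q : ℝ → EuclideanSpace ℝ (Fin n))
    (hq : ∀ t ∈ Set.Icc (0 : ℝ) T, (∑ i, |q t i|) ≤ 1)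
    (hform : ∀ t ∈ Set.Icc (0 : ℝ) T, φ' t =
      f₀ + appMat U (appMat (Matrix.diagonal fun i => lam i ‖φ t‖) (q t))) :
    ∀ fh Gh, Consistent R Lf LG f₀ G₀ fh Gh →
      ∃ u : ℝ → EuclideanSpace ℝ (Fin m),
        ∀ t ∈ Set.Icc (0 : ℝ) T,
          ‖u t‖ ≤ 1 ∧ φ' t = fh (φ t) + appMat (Gh (φ t)) (u t) := by
  
  intro fh Gh cons
  have hσ : 0 < minSV G₀ := minSV_pos hG₀
  have hcolR : colSpace G₀ = colSpace R := hG₀fac ▸ colSpace_mul_unit R H₀ hH₀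
  have hμ1 : 1 ≤ μ := by
    rw [hμ]
    split_ifs
    · norm_num
    · nlinarith [Real.sq_sqrt (show (0:ℝ) ≤ 2 by norm_num), Real.sqrt_nonneg 2]
    · nlinarith [Real.sq_sqrt (show (0:ℝ) ≤ 5 by norm_num), Real.sqrt_nonneg 5]
  have hηnorm : ∀ i : Fin n, ‖η i‖ = 1 := by
    intro i
    have h : ⟪η i, η i⟫ = 1 := by
      rw [PiLp.inner_apply]
      have h1 : ∀ j, (inner ℝ (η i j) (η i j) : ℝ) = Uᵀ i j * U j i := by
        intro j
        rw [RCLike.inner_apply, hη]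
        simp [Matrix.transpose_apply]
      rw [Finset.sum_congr rfl fun j _ => h1 j, ← Matrix.mul_apply, hU]
      exact Matrix.one_apply_eq i
    have h2 : ‖η i‖ ^ 2 = 1 := by rw [← real_inner_self_eq_norm_sq]; exact h
    nlinarith [norm_nonneg (η i)]
  have key : ∀ t : ℝ, ∃ u : EuclideanSpace ℝ (Fin m), t ∈ Set.Icc (0:ℝ) T →
      (‖u‖ ≤ 1 ∧ φ' t = fh (φ t) + appMat (Gh (φ t)) u) := by
    intro t
    by_cases ht : t ∈ Set.Icc (0:ℝ) T
    case neg => exact ⟨0, fun h => absurd h ht⟩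
    set x := φ t with hx
    set s := ‖x‖ with hsdef
    have hs0 : 0 ≤ s := norm_nonneg x
    have hstayt : (Lf + LG) * s ≤ minSV G₀ := hstay t ht
    have hstay' : Lf * s + LG * s ≤ minSV G₀ := by nlinarith
    have hg0 : 0 ≤ g s := by rw [hg s]; linarith
    have hLGs : LG * s < minSV G₀ := by
      rcases lt_or_eq_of_le hs0 with h | h
      · nlinarith
      · rw [← h]; simpa using hσ
    set ρ := (minSV G₀)⁻¹ * (LG * s) with hρdef
    have hinv : (minSV G₀)⁻¹ * minSV G₀ = 1 := inv_mul_cancel₀ hσ.ne'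
    have hρ1 : ρ < 1 := by
      rw [hρdef]
      calc (minSV G₀)⁻¹ * (LG * s) < (minSV G₀)⁻¹ * minSV G₀ :=
        (mul_lt_mul_iff_right₀ (inv_pos.mpr hσ)).mpr hLGs
        _ = 1 := hinv
    have hρ0 : 0 ≤ ρ := mul_nonneg (inv_nonneg.mpr hσ.le) (mul_nonneg hLG.le hs0)
    -- the perturbation D
    set D := Gh x - G₀ with hD
    have hDop : matOpNorm D ≤ LG * s := by
      have h1 := cons.lipG x 0
      rw [cons.G_zero] at h1
      simpa using h1
    have hDn : ∀ u : EuclideanSpace ℝ (Fin m),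
        ‖Matrix.toEuclideanLin D u‖ ≤ minSV G₀ * ρ * ‖u‖ := by
      intro u
      have h1 := (LinearMap.toContinuousLinearMap (Matrix.toEuclideanLin D)).le_opNorm u
      have h2 : ‖Matrix.toEuclideanLin D u‖ ≤ matOpNorm D * ‖u‖ := h1
      have h3 : minSV G₀ * ρ = LG * s := by
        rw [hρdef, ← mul_assoc, mul_inv_cancel₀ hσ.ne', one_mul]
      rw [h3]
      exact h2.trans (mul_le_mul_of_nonneg_right hDop (norm_nonneg u))
    have hDr : ∀ u, Matrix.toEuclideanLin D u ∈
        LinearMap.range (Matrix.toEuclideanLin G₀) := by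
      obtain ⟨Hh, hHh0, hHh⟩ := cons.factor
      intro u
      have hDfac : D = R * (Hh x - H₀) := by
        rw [hD, hHh x, hG₀fac, Matrix.mul_sub]
      have : Matrix.toEuclideanLin D u ∈ colSpace R := by
        rw [hDfac, toEuclideanLin_mul_apply]
        exact mem_colSpace.mpr ⟨_, rfl⟩
      rw [← hcolR] at this
      exact this
    -- bounds on the w i
    have hworth : ∀ i : Fin n, (i : ℕ) < G₀.rank →
        ∀ z, Matrix.toEuclideanLin G₀ z = 0 → ⟪z, w i⟫ = 0 := by
      intro i hi z hz
      obtain ⟨y, hy⟩ := mem_colSpace.mp (hw i hi).1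
      rw [← hy]
      have hTT : G₀ᴴ = G₀ᵀ := by
        ext a b
        simp [Matrix.conjTranspose_apply]
      have hadj : Matrix.toEuclideanLin G₀ᵀ
          = LinearMap.adjoint (Matrix.toEuclideanLin G₀) := by
        rw [← Matrix.toEuclideanLin_conjTranspose_eq_adjoint, hTT]
      rw [hadj, LinearMap.adjoint_inner_right, hz, inner_zero_left]
    have hwle : ∀ i : Fin n, (i : ℕ) < G₀.rank → ‖w i‖ ≤ (minSV G₀)⁻¹ := by
      intro i hi
      have h1 := minSV_mul_norm_le hG₀ (w i) (hworth i hi)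
      rw [(hw i hi).2, hηnorm i] at h1
      nlinarith [mul_inv_cancel₀ hσ.ne']
    have hwpos : ∀ i : Fin n, (i : ℕ) < G₀.rank → 0 < ‖w i‖ := by
      intro i hi
      rw [norm_pos_iff]
      intro h0
      have h1 := (hw i hi).2
      rw [h0] at h1
      have h2 : appMat G₀ (0 : EuclideanSpace ℝ (Fin m)) = 0 := by
        rw [appMat_def, map_zero]
      rw [h2] at h1
      have := hηnorm i
      rw [← h1] at this
      simp at this
    -- the key per-coordinate bound
    have hlamnn : ∀ i : Fin n, 0 ≤ lam i s := by
      intro i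
      rw [hlam]
      split_ifs
      · exact le_max_right _ _
      · exact le_refl 0
    have hlamw : ∀ i : Fin n, lam i s * ‖w i‖ ≤ (minSV G₀)⁻¹ * g s := by
      intro i
      have hrhs : 0 ≤ (minSV G₀)⁻¹ * g s := mul_nonneg (inv_nonneg.mpr hσ.le) hg0
      rw [hlam]
      by_cases hi : (i : ℕ) < G₀.rank
      · rw [if_pos hi]
        set W := ‖w i‖ with hW
        have hWpos := hwpos i hi
        have hWle := hwle i hi
        have hαs : α s = minSV G₀ - LG * s := hα s
        have hβs : β s = μ * (minSV G₀)⁻¹ * (LG * s) := hβ s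
        have hβnn : 0 ≤ β s := by
          rw [hβs]
          have : (0:ℝ) ≤ μ := by linarith
          positivity
        have hden : 0 < α s * W + β s := by
          have : 0 < α s := by rw [hαs]; linarith
          nlinarith
        have h0W : (0:ℝ) * W ≤ (minSV G₀)⁻¹ * g s := by
          rw [zero_mul]; exact hrhs
        have hgW : g s * W ≤ (minSV G₀)⁻¹ * g s := by nlinarith
        have haW : g s / (α s * W + β s) * W ≤ (minSV G₀)⁻¹ * g s := by
          rw [div_mul_eq_mul_div, div_le_iff₀ hden]
          rw [hαs, hβs]
          have hμσ : W ≤ μ * (minSV G₀)⁻¹ := by nlinarith [inv_nonneg.mpr hσ.le]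
          have hkey : 0 ≤ (minSV G₀)⁻¹ * g s * (LG * s) * (μ * (minSV G₀)⁻¹ - W) := by
            have h1 : 0 ≤ μ * (minSV G₀)⁻¹ - W := by linarith
            have h2 : 0 ≤ LG * s := mul_nonneg hLG.le hs0
            positivity
          have hexpand : (minSV G₀)⁻¹ * g s *
              ((minSV G₀ - LG * s) * W + μ * (minSV G₀)⁻¹ * (LG * s))
              = g s * W + (minSV G₀)⁻¹ * g s * (LG * s) * (μ * (minSV G₀)⁻¹ - W) := by
            linear_combination (g s * W) * hinv
          rw [hexpand]
          linarith
        rcases max_cases (max (g s / (α s * W + β s)) (g s)) 0 with ⟨h1, _⟩ | ⟨h1, _⟩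
        · rw [h1]
          rcases max_cases (g s / (α s * W + β s)) (g s) with ⟨h2, _⟩ | ⟨h2, _⟩ <;>
            rw [h2] <;> assumption
        · rw [h1]; exact h0W
      · rw [if_neg hi, zero_mul]; exact hrhs
    -- the preimage v₀ of f₀ - fh x
    have hfmem : f₀ - fh x ∈ LinearMap.range (Matrix.toEuclideanLin G₀) := by
      have h1 : f₀ - fh x ∈ colSpace R := Submodule.sub_mem _ hf₀ (cons.f_im x)
      rw [← hcolR] at h1
      exact h1
    obtain ⟨v₀, hv₀G, hv₀n⟩ := exists_preimage hG₀ hfmem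
    have hf0x : ‖f₀ - fh x‖ ≤ Lf * s := by
      have h1 := cons.lipf 0 x
      rw [cons.f_zero] at h1
      simpa [zero_sub] using h1
    have hv₀ : ‖v₀‖ ≤ (minSV G₀)⁻¹ * (Lf * s) := by
      have h1 := hv₀n.trans hf0x
      nlinarith [mul_inv_cancel₀ hσ.ne', norm_nonneg v₀]
    -- the candidate v
    set v := v₀ + ∑ i, (lam i s * q t i) • w i with hv
    have hGv : Matrix.toEuclideanLin G₀ v = φ' t - fh x := by
      have hsum : ∑ i, Matrix.toEuclideanLin G₀ ((lam i s * q t i) • w i)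
          = ∑ i, (lam i s * q t i) • η i := by
        refine Finset.sum_congr rfl fun i _ => ?_
        rw [_root_.map_smul]
        by_cases hi : (i : ℕ) < G₀.rank
        · rw [show Matrix.toEuclideanLin G₀ (w i) = η i from (hw i hi).2]
        · have hz : lam i s = 0 := by rw [hlam]; exact if_neg hi
          rw [hz, zero_mul, zero_smul, zero_smul]
      have hAq : appMat U (appMat (Matrix.diagonal fun i => lam i ‖φ t‖) (q t))
          = ∑ i, (lam i s * q t i) • η i := by
        rw [appMat_def, appMat_def, ← hx]
        exact sum_formula U (fun i => lam i s) (q t) η hη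
      rw [hv, map_add, map_sum, hsum, hv₀G, hform t ht, hAq]
      abel
    have hvnorm : ‖v‖ ≤ 1 - ρ := by
      have hq1 := hq t ht
      have hqnn : (0:ℝ) ≤ ∑ i, |q t i| := Finset.sum_nonneg fun i _ => abs_nonneg _
      have h2 : ‖∑ i, (lam i s * q t i) • w i‖ ≤ (minSV G₀)⁻¹ * g s := by
        calc ‖∑ i, (lam i s * q t i) • w i‖
            ≤ ∑ i, ‖(lam i s * q t i) • w i‖ := norm_sum_le _ _
          _ ≤ ∑ i, (minSV G₀)⁻¹ * g s * |q t i| := by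
              refine Finset.sum_le_sum fun i _ => ?_
              rw [norm_smul, Real.norm_eq_abs, abs_mul, abs_of_nonneg (hlamnn i)]
              calc lam i s * |q t i| * ‖w i‖ = lam i s * ‖w i‖ * |q t i| := by ring
                _ ≤ (minSV G₀)⁻¹ * g s * |q t i| :=
                    mul_le_mul_of_nonneg_right (hlamw i) (abs_nonneg _)
          _ = (minSV G₀)⁻¹ * g s * ∑ i, |q t i| := by rw [← Finset.mul_sum]
          _ ≤ (minSV G₀)⁻¹ * g s * 1 :=
              mul_le_mul_of_nonneg_left hq1
                (mul_nonneg (inv_nonneg.mpr hσ.le) hg0)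
          _ = (minSV G₀)⁻¹ * g s := mul_one _
      have h3 : ‖v‖ ≤ (minSV G₀)⁻¹ * (Lf * s) + (minSV G₀)⁻¹ * g s := by
        calc ‖v‖ ≤ ‖v₀‖ + ‖∑ i, (lam i s * q t i) • w i‖ := norm_add_le _ _
          _ ≤ _ := add_le_add hv₀ h2
      have h4 : (minSV G₀)⁻¹ * (Lf * s) + (minSV G₀)⁻¹ * g s = 1 - ρ := by
        rw [hg s, hρdef]
        linear_combination hinv
      linarith
    -- solve the perturbed system
    obtain ⟨u, huG, hun⟩ := solve_perturbed hG₀ hρ1 hDn hDr v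
    refine ⟨u, fun _ => ⟨?_, ?_⟩⟩
    · nlinarith
    · have hGD : G₀ + D = Gh x := by rw [hD]; abel
      rw [hGD] at huG
      rw [appMat_def, huG, hGv]
      abel
  choose u hu using key
  exact ⟨u, fun t ht => hu t ht⟩
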